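/- For every real r with 1/3 < r < 1 there exist n ≥ 2 and matrices A, S, B ∈ M_n(ℂ) with A upper triangular, Tr(A) a nonnegative real number, S Hermitian diagonal with real entries satisfying Re(A) ≤ S, and B strictly upper triangular with ‖B‖ ≤ 1, such that Tr(A) + ∑_{m=1}^∞ |Tr(A B*)| r^m > Tr(S). -/

import Mathlib

open Matrix
open scoped Matrix.Norms.L2Operator ComplexOrder

namespace BohrAux

variable (m : ℕ) (t : ℝ)

/-- The nilpotent forward shift. -/
noncomputable def NN : Matrix (Fin (m + 2)) (Fin (m + 2)) ℂ :=
  Matrix.of fun i j => if (i : ℕ) + 1 = (j : ℕ) then 1 else 0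

/-- The rank one projection onto the first coordinate. -/
noncomputable def EE : Matrix (Fin (m + 2)) (Fin (m + 2)) ℂ :=
  Matrix.of fun i j => if (i : ℕ) = 0 ∧ (j : ℕ) = 0 then 1 else 0

/-- The inverse of `1 - t • NN`. -/
noncomputable def LL : Matrix (Fin (m + 2)) (Fin (m + 2)) ℂ :=
  Matrix.of fun i j => if (i : ℕ) ≤ (j : ℕ) then ((t : ℂ)) ^ ((j : ℕ) - (i : ℕ)) else 0

noncomputable def MM : Matrix (Fin (m + 2)) (Fin (m + 2)) ℂ := 1 - (t : ℂ) • NN m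

noncomputable def DD : Matrix (Fin (m + 2)) (Fin (m + 2)) ℂ := (t : ℂ) • 1 - NN m

noncomputable def AA : Matrix (Fin (m + 2)) (Fin (m + 2)) ℂ := LL m t * DD m t

lemma NN_apply (i j : Fin (m + 2)) :
    NN m i j = if (i : ℕ) + 1 = (j : ℕ) then 1 else 0 := rfl

lemma LL_apply (i j : Fin (m + 2)) :
    LL m t i j = if (i : ℕ) ≤ (j : ℕ) then ((t : ℂ)) ^ ((j : ℕ) - (i : ℕ)) else 0 := rfl

lemma NN_mul_apply (G : Matrix (Fin (m + 2)) (Fin (m + 2)) ℂ) (i j : Fin (m + 2)) :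
    (NN m * G) i j = if h : (i : ℕ) + 1 < m + 2 then G ⟨(i : ℕ) + 1, h⟩ j else 0 := by
  rw [Matrix.mul_apply]
  split_ifs with h
  · rw [Finset.sum_eq_single (⟨(i : ℕ) + 1, h⟩ : Fin (m + 2))]
    · simp [NN_apply]
    · intro p _ hp
      have : ¬((i : ℕ) + 1 = (p : ℕ)) := fun hc => hp (by ext; simp [hc.symm])
      simp [NN_apply, this]
    · simp
  · apply Finset.sum_eq_zero
    intro p _
    have : ¬((i : ℕ) + 1 = (p : ℕ)) := fun hc => h (hc ▸ p.isLt)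
    simp [NN_apply, this]

lemma mul_NN_apply (G : Matrix (Fin (m + 2)) (Fin (m + 2)) ℂ) (i j : Fin (m + 2)) :
    (G * NN m) i j = if 0 < (j : ℕ) then
      G i ⟨(j : ℕ) - 1, Nat.lt_of_le_of_lt (Nat.sub_le _ _) j.isLt⟩ else 0 := by
  rw [Matrix.mul_apply]
  split_ifs with h
  · rw [Finset.sum_eq_single (⟨(j : ℕ) - 1, Nat.lt_of_le_of_lt (Nat.sub_le _ _) j.isLt⟩ :
      Fin (m + 2))]
    · simp only [NN_apply]
      rw [if_pos (by simpa using Nat.succ_pred_eq_of_pos h)]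
      ring
    · intro p _ hp
      have : ¬((p : ℕ) + 1 = (j : ℕ)) := by
        intro hc
        apply hp; ext; simp [← hc]
      simp [NN_apply, this]
    · simp
  · apply Finset.sum_eq_zero
    intro p _
    have : ¬((p : ℕ) + 1 = (j : ℕ)) := by omega
    simp [NN_apply, this]

lemma MM_mul_LL : MM m t * LL m t = 1 := by
  ext i j
  rw [MM, Matrix.sub_mul, Matrix.smul_mul, Matrix.one_mul]
  rw [Matrix.sub_apply, Matrix.smul_apply, NN_mul_apply]
  rcases lt_trichotomy (j : ℕ) (i : ℕ) with hij | hij | hij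
  · -- strictly lower: everything vanishes
    have h1 : LL m t i j = 0 := by rw [LL_apply, if_neg (by omega)]
    have h2 : (1 : Matrix (Fin (m+2)) (Fin (m+2)) ℂ) i j = 0 := by
      rw [Matrix.one_apply_ne (by intro hc; subst hc; omega)]
    rw [h1, h2]
    split_ifs with h
    · rw [LL_apply, if_neg (by simp; omega)]
      simp
    · simp
  · -- diagonal
    have hji : j = i := by ext; omega
    subst hji
    have h1 : LL m t j j = 1 := by rw [LL_apply, if_pos le_rfl]; simp
    rw [h1, Matrix.one_apply_eq]
    split_ifs with h
    · rw [LL_apply, if_neg (by simp)]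
      simp
    · simp
  · -- strictly upper
    have h2 : (1 : Matrix (Fin (m+2)) (Fin (m+2)) ℂ) i j = 0 := by
      rw [Matrix.one_apply_ne (by intro hc; subst hc; omega)]
    have h : (i : ℕ) + 1 < m + 2 := by omega
    rw [h2, dif_pos h, LL_apply, LL_apply, if_pos (by omega), if_pos (by simp; omega)]
    have hexp : (j : ℕ) - (i : ℕ) = ((j : ℕ) - ((i : ℕ) + 1)) + 1 := by omega
    simp only [hexp]
    rw [pow_succ]
    simp [smul_eq_mul]
    ring

lemma LL_mul_MM : LL m t * MM m t = 1 :=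
  mul_eq_one_comm.mp (MM_mul_LL m t)

lemma DD_comm_MM : DD m t * MM m t = MM m t * DD m t := by
  rw [DD, MM]
  simp only [Matrix.sub_mul, Matrix.mul_sub, Matrix.smul_mul, Matrix.mul_smul,
    Matrix.one_mul, Matrix.mul_one, smul_smul]
  module

lemma AA_mul_MM : AA m t * MM m t = DD m t := by
  rw [AA, Matrix.mul_assoc, DD_comm_MM, ← Matrix.mul_assoc, LL_mul_MM, Matrix.one_mul]

lemma NN_conjTranspose_mul_NN : (NN m)ᴴ * NN m = 1 - EE m := by
  ext j l
  rw [Matrix.mul_apply]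
  by_cases hjl : j = l
  · subst hjl
    by_cases h0 : (j : ℕ) = 0
    · rw [Finset.sum_eq_zero]
      · simp [EE, Matrix.one_apply_eq, h0, (by ext; simp [h0] : j = 0)]
      · intro p _
        simp [NN_apply, Matrix.conjTranspose_apply, h0]
    · rw [Finset.sum_eq_single (⟨(j : ℕ) - 1, Nat.lt_of_le_of_lt (Nat.sub_le _ _) j.isLt⟩ :
        Fin (m + 2))]
      · simp only [Matrix.conjTranspose_apply, NN_apply]
        rw [if_pos (by show (j : ℕ) - 1 + 1 = (j : ℕ); omega)]
        simp [EE, Matrix.one_apply_eq, h0, (show j ≠ 0 from fun hc => h0 (by simp [hc]))]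
      · intro p _ hp
        have : ¬((p : ℕ) + 1 = (j : ℕ)) := by
          intro hc; apply hp; ext; simp [← hc]
        simp [NN_apply, Matrix.conjTranspose_apply, this]
      · simp
  · rw [Finset.sum_eq_zero]
    · have : ¬((j : ℕ) = 0 ∧ (l : ℕ) = 0) := by
        rintro ⟨h1, h2⟩; exact hjl (by ext; omega)
      simp [EE, Matrix.one_apply_ne hjl, this]
      rintro rfl rfl; exact hjl rfl
    · intro p _
      simp only [Matrix.conjTranspose_apply, NN_apply]
      by_cases hQ : (p : ℕ) + 1 = (l : ℕ)
      · have hP : ¬((p : ℕ) + 1 = (j : ℕ)) := fun hc => hjl (Fin.ext (by omega))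
        simp [hP]
      · simp [hQ]

lemma EE_conjTranspose : (EE m)ᴴ = EE m := by
  ext i j
  simp [EE, Matrix.conjTranspose_apply, and_comm]

lemma EE_mul_EE : EE m * EE m = EE m := by
  ext i j
  rw [Matrix.mul_apply]
  by_cases h : (i : ℕ) = 0 ∧ (j : ℕ) = 0
  · rw [Finset.sum_eq_single (⟨0, by omega⟩ : Fin (m + 2))]
    · simp [EE, h.1, h.2, (by ext; simp [h.1] : i = 0), (by ext; simp [h.2] : j = 0)]
    · intro p _ hp
      have : ¬((i : ℕ) = 0 ∧ (p : ℕ) = 0) := by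
        rintro ⟨_, h2⟩; exact hp (by ext; simp [h2])
      simp [EE, this]
      intro hp0 _ hi0 _; exact this ⟨by simp [hi0], by simp [hp0]⟩
    · simp
  · rw [Finset.sum_eq_zero]
    · simp [EE, h]
      intro hi hj; exact h ⟨by simp [hi], by simp [hj]⟩
    · intro p _
      simp only [EE, Matrix.of_apply]
      by_cases hQ : (p : ℕ) = 0 ∧ (j : ℕ) = 0
      · have hP : ¬((i : ℕ) = 0 ∧ (p : ℕ) = 0) := fun hc => h ⟨hc.1, hQ.2⟩
        simp [hP]
        intro hp0 _ hi0 _; exact hP ⟨by simp [hi0], by simp [hp0]⟩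
      · simp [hQ]
        intro hp0 hj0 _ _; exact hQ ⟨by simp [hp0], by simp [hj0]⟩


lemma mul_NNH_apply (G : Matrix (Fin (m + 2)) (Fin (m + 2)) ℂ) (i j : Fin (m + 2)) :
    (G * (NN m)ᴴ) i j = if h : (j : ℕ) + 1 < m + 2 then G i ⟨(j : ℕ) + 1, h⟩ else 0 := by
  rw [Matrix.mul_apply]
  split_ifs with h
  · rw [Finset.sum_eq_single (⟨(j : ℕ) + 1, h⟩ : Fin (m + 2))]
    · simp [NN_apply, Matrix.conjTranspose_apply]
    · intro p _ hp
      have : ¬((j : ℕ) + 1 = (p : ℕ)) := fun hc => hp (by ext; simp [hc.symm])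
      simp [NN_apply, Matrix.conjTranspose_apply, this]
    · simp
  · apply Finset.sum_eq_zero
    intro p _
    have : ¬((j : ℕ) + 1 = (p : ℕ)) := fun hc => h (hc ▸ p.isLt)
    simp [NN_apply, Matrix.conjTranspose_apply, this]

lemma AA_apply (i j : Fin (m + 2)) :
    AA m t i j = (t : ℂ) * LL m t i j - (if 0 < (j : ℕ) then
      LL m t i ⟨(j : ℕ) - 1, Nat.lt_of_le_of_lt (Nat.sub_le _ _) j.isLt⟩ else 0) := by
  rw [AA, DD, Matrix.mul_sub, Matrix.mul_smul, Matrix.mul_one, Matrix.sub_apply,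
    Matrix.smul_apply, mul_NN_apply, smul_eq_mul]

lemma AA_lower (i j : Fin (m + 2)) (hij : (j : ℕ) < (i : ℕ)) : AA m t i j = 0 := by
  rw [AA_apply, LL_apply, if_neg (by omega)]
  split_ifs with h
  · rw [LL_apply, if_neg (by show ¬((i : ℕ) ≤ (j : ℕ) - 1); omega)]
    ring
  · ring

lemma AA_diag (i : Fin (m + 2)) : AA m t i i = (t : ℂ) := by
  rw [AA_apply, LL_apply, if_pos le_rfl]
  split_ifs with h
  · rw [LL_apply, if_neg (by show ¬((i : ℕ) ≤ (i : ℕ) - 1); omega)]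
    simp
  · simp

lemma AA_superdiag (i j : Fin (m + 2)) (hij : (i : ℕ) + 1 = (j : ℕ)) :
    AA m t i j = (t : ℂ) ^ 2 - 1 := by
  rw [AA_apply, LL_apply, if_pos (by omega), if_pos (by omega)]
  rw [LL_apply, if_pos (by show (i : ℕ) ≤ (j : ℕ) - 1; omega)]
  have h1 : (j : ℕ) - (i : ℕ) = 1 := by omega
  have h2 : ((j : ℕ) - 1 : ℕ) - (i : ℕ) = 0 := by omega
  rw [h1]
  show (t : ℂ) * (t : ℂ) ^ 1 - (t : ℂ) ^ (((j : ℕ) - 1 : ℕ) - (i : ℕ)) = _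
  rw [h2]
  ring

lemma trace_AA : (AA m t).trace = ((m + 2 : ℕ) : ℂ) * (t : ℂ) := by
  rw [Matrix.trace]
  have : ∀ i : Fin (m + 2), (AA m t).diag i = (t : ℂ) := fun i => AA_diag m t i
  rw [Finset.sum_congr rfl fun i _ => this i]
  simp [mul_comm]

lemma trace_AA_mul_NNH :
    (AA m t * (NN m)ᴴ).trace = ((m + 1 : ℕ) : ℂ) * ((t : ℂ) ^ 2 - 1) := by
  rw [Matrix.trace]
  have key : ∀ i : Fin (m + 2), (AA m t * (NN m)ᴴ).diag i =
      if (i : ℕ) + 1 < m + 2 then (t : ℂ) ^ 2 - 1 else 0 := by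
    intro i
    show (AA m t * (NN m)ᴴ) i i = _
    rw [mul_NNH_apply]
    split_ifs with h
    · exact AA_superdiag m t i ⟨(i : ℕ) + 1, h⟩ rfl
    · rfl
  rw [Finset.sum_congr rfl fun i _ => key i]
  rw [Fin.sum_univ_castSucc]
  have h1 : ∀ i : Fin (m + 1), (if ((Fin.castSucc i : Fin (m + 2)) : ℕ) + 1 < m + 2
      then (t : ℂ) ^ 2 - 1 else 0) = (t : ℂ) ^ 2 - 1 := by
    intro i
    rw [if_pos (by simp only [Fin.coe_castSucc]; omega)]
  rw [Finset.sum_congr rfl fun i _ => h1 i, if_neg (by simp)]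
  simp [mul_comm]
  ring

set_option maxHeartbeats 1000000 in
lemma norm_NN_le_one : ‖NN m‖ ≤ 1 := by
  have h1 : ‖(NN m)ᴴ * NN m‖ = ‖NN m‖ * ‖NN m‖ := by
    rw [← Matrix.star_eq_conjTranspose]
    exact CStarRing.norm_star_mul_self
  set p : Matrix (Fin (m + 2)) (Fin (m + 2)) ℂ := 1 - EE m with hp
  have hpp : p * p = p := by
    rw [hp, Matrix.sub_mul, Matrix.one_mul, Matrix.mul_sub, Matrix.mul_one, EE_mul_EE,
      sub_self, sub_zero]
  have hps : star p = p := by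
    rw [hp, Matrix.star_eq_conjTranspose, Matrix.conjTranspose_sub, Matrix.conjTranspose_one,
      EE_conjTranspose]
  have h2 : ‖star p * p‖ = ‖p‖ * ‖p‖ := CStarRing.norm_star_mul_self
  rw [hps, hpp] at h2
  have h3 : ‖p‖ ≤ 1 := by nlinarith [norm_nonneg p, h2]
  have h4 : ‖NN m‖ * ‖NN m‖ ≤ 1 := by
    rw [← h1, NN_conjTranspose_mul_NN, ← hp]
    exact h3
  nlinarith [norm_nonneg (NN m)]

lemma posSemidef_X (ht0 : 0 ≤ t) (ht1 : t ≤ 1) :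
    ((1 : Matrix (Fin (m + 2)) (Fin (m + 2)) ℂ)
      - (2 : ℂ)⁻¹ • (AA m t + (AA m t)ᴴ)).PosSemidef := by
  set N : Matrix (Fin (m + 2)) (Fin (m + 2)) ℂ := NN m with hN
  set E : Matrix (Fin (m + 2)) (Fin (m + 2)) ℂ := EE m with hE
  set L : Matrix (Fin (m + 2)) (Fin (m + 2)) ℂ := LL m t with hL
  set M : Matrix (Fin (m + 2)) (Fin (m + 2)) ℂ := MM m t with hM
  set D : Matrix (Fin (m + 2)) (Fin (m + 2)) ℂ := DD m t with hD
  set X : Matrix (Fin (m + 2)) (Fin (m + 2)) ℂ :=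
    1 - (2 : ℂ)⁻¹ • (AA m t + (AA m t)ᴴ) with hX
  set d₁ : ℝ := Real.sqrt ((1 - t) ^ 2 / 2) with hd₁
  set d₂ : ℝ := Real.sqrt ((1 - t ^ 2) / 2) with hd₂
  set C₁ : Matrix (Fin (m + 2)) (Fin (m + 2)) ℂ := (d₁ : ℂ) • (1 + N) with hC₁
  set C₂ : Matrix (Fin (m + 2)) (Fin (m + 2)) ℂ := (d₂ : ℂ) • E with hC₂
  have hP : (C₁ᴴ * C₁ + C₂ᴴ * C₂).PosSemidef :=
    (Matrix.posSemidef_conjTranspose_mul_self C₁).add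
      (Matrix.posSemidef_conjTranspose_mul_self C₂)
  have hMH : Mᴴ = 1 - (t : ℂ) • Nᴴ := by
    rw [hM, MM, Matrix.conjTranspose_sub, Matrix.conjTranspose_smul, Matrix.conjTranspose_one,
      Complex.star_def, Complex.conj_ofReal, hN]
  have hDH : Dᴴ = (t : ℂ) • 1 - Nᴴ := by
    rw [hD, DD, Matrix.conjTranspose_sub, Matrix.conjTranspose_smul, Matrix.conjTranspose_one,
      Complex.star_def, Complex.conj_ofReal, hN]
  have hNHN : Nᴴ * N = 1 - E := NN_conjTranspose_mul_NN m
  have hAM : AA m t * M = D := AA_mul_MM m t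
  have hMAH : Mᴴ * (AA m t)ᴴ = Dᴴ := by rw [← Matrix.conjTranspose_mul, hAM]
  have hC1sq : C₁ᴴ * C₁ = (((1 - t) ^ 2 / 2 : ℝ) : ℂ) • ((1 + N)ᴴ * (1 + N)) := by
    rw [hC₁, Matrix.conjTranspose_smul, Matrix.smul_mul, Matrix.mul_smul, smul_smul,
      Complex.star_def, Complex.conj_ofReal, ← Complex.ofReal_mul,
      Real.mul_self_sqrt (by positivity)]
  have hC2sq : C₂ᴴ * C₂ = (((1 - t ^ 2) / 2 : ℝ) : ℂ) • E := by
    rw [hC₂, Matrix.conjTranspose_smul, Matrix.smul_mul, Matrix.mul_smul, smul_smul,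
      Complex.star_def, Complex.conj_ofReal, ← Complex.ofReal_mul,
      Real.mul_self_sqrt (by nlinarith), hE, EE_conjTranspose, EE_mul_EE, ← hE]
  have hMXM : Mᴴ * X * M = C₁ᴴ * C₁ + C₂ᴴ * C₂ := by
    have e1 : Mᴴ * X * M = Mᴴ * M - (2 : ℂ)⁻¹ • (Mᴴ * D + Dᴴ * M) := by
      rw [hX]
      rw [Matrix.mul_sub, Matrix.mul_one, Matrix.sub_mul, Matrix.mul_smul, Matrix.smul_mul,
        Matrix.mul_add, Matrix.add_mul, Matrix.mul_assoc (Mᴴ) (AA m t) M, hAM,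
        Matrix.mul_assoc (Mᴴ) ((AA m t)ᴴ) M, ← Matrix.mul_assoc (Mᴴ) ((AA m t)ᴴ) M, hMAH]
    rw [e1, hC1sq, hC2sq, hMH, hDH, hM, MM, hD, DD, ← hN]
    rw [Matrix.conjTranspose_add, Matrix.conjTranspose_one]
    simp only [Matrix.mul_sub, Matrix.sub_mul, Matrix.mul_add, Matrix.add_mul,
      Matrix.smul_mul, Matrix.mul_smul, Matrix.one_mul, Matrix.mul_one, smul_smul,
      hNHN, smul_sub, smul_add]
    match_scalars <;> (push_cast; ring)
  have hkey : X = Lᴴ * (C₁ᴴ * C₁ + C₂ᴴ * C₂) * L := by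
    rw [← hMXM]
    calc X = (M * L)ᴴ * X * (M * L) := by rw [hM, hL, MM_mul_LL]; simp
    _ = Lᴴ * (Mᴴ * X * M) * L := by
        rw [Matrix.conjTranspose_mul]
        simp only [Matrix.mul_assoc]
  rw [hkey]
  exact hP.conjTranspose_mul_mul_same L

end BohrAux

theorem bohr_matrix_optimality_unbounded_size (r : ℝ) (hr1 : 1 / 3 < r) (hr2 : r < 1) :
    ∃ n : ℕ, 2 ≤ n ∧
      ∃ A S B : Matrix (Fin n) (Fin n) ℂ,
        (∀ i j : Fin n, j < i → A i j = 0) ∧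
        0 ≤ A.trace ∧
        S.IsHermitian ∧
        (∀ i j : Fin n, i ≠ j → S i j = 0) ∧
        (∀ i : Fin n, (S i i).im = 0) ∧
        (S - (2 : ℂ)⁻¹ • (A + Aᴴ)).PosSemidef ∧
        (∀ i j : Fin n, j ≤ i → B i j = 0) ∧
        ‖B‖ ≤ 1 ∧
        A.trace.re + ∑' m : ℕ, ‖(A * Bᴴ).trace‖ * r ^ (m + 1) >
          S.trace.re := by
  classical
  have hr0 : 0 < r := lt_trans (by norm_num) hr1
  have h3r : 0 < 3 * r - 1 := by linarith
  set m : ℕ := ⌈2 * r / (3 * r - 1)⌉₊ with hm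
  have hmge : 2 * r / (3 * r - 1) ≤ (m : ℝ) := Nat.le_ceil _
  have hk : ((m : ℝ) + 2) < (3 * (m : ℝ) + 4) * r := by
    rw [div_le_iff₀ h3r] at hmge
    nlinarith
  set t0 : ℝ := ((m : ℝ) + 2) * (1 - r) / (((m : ℝ) + 1) * r) - 1 with ht0def
  have hm1r : 0 < ((m : ℝ) + 1) * r := by positivity
  have ht01 : t0 < 1 := by
    rw [ht0def, sub_lt_iff_lt_add, div_lt_iff₀ hm1r]
    nlinarith
  set t : ℝ := max ((t0 + 1) / 2) (1 / 2) with htdef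
  clear_value t0 t
  have ht1 : t < 1 := by
    rw [htdef]
    apply max_lt (by linarith) (by norm_num)
  have hthalf : (1 / 2 : ℝ) ≤ t := by rw [htdef]; exact le_max_right _ _
  have ht0 : 0 ≤ t := by linarith
  have htgt : t0 < t := by
    rw [htdef]
    exact lt_of_lt_of_le (by linarith) (le_max_left _ _)
  have hkey : ((m : ℝ) + 2) * (1 - r) < ((m : ℝ) + 1) * r * (1 + t) := by
    have h' : ((m : ℝ) + 2) * (1 - r) / (((m : ℝ) + 1) * r) < 1 + t := by linarith
    rw [div_lt_iff₀ hm1r] at h'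
    nlinarith
  refine ⟨m + 2, by omega, BohrAux.AA m t, 1, BohrAux.NN m, ?_, ?_, ?_, ?_, ?_, ?_, ?_, ?_, ?_⟩
  · intro i j hij
    exact BohrAux.AA_lower m t i j hij
  · rw [BohrAux.trace_AA]
    have : ((m + 2 : ℕ) : ℂ) * (t : ℂ) = ((((m : ℝ) + 2) * t : ℝ) : ℂ) := by push_cast; ring
    rw [this]
    exact Complex.zero_le_real.mpr (by positivity)
  · exact Matrix.isHermitian_one
  · intro i j hij
    exact Matrix.one_apply_ne hij
  · intro i
    rw [Matrix.one_apply_eq]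
    simp
  · exact BohrAux.posSemidef_X m t ht0 (le_of_lt ht1)
  · intro i j hij
    rw [BohrAux.NN_apply, if_neg (by omega)]
  · exact BohrAux.norm_NN_le_one m
  · -- the strict inequality
    rw [BohrAux.trace_AA, BohrAux.trace_AA_mul_NNH, Matrix.trace_one]
    have e1 : ((m + 2 : ℕ) : ℂ) * (t : ℂ) = ((((m : ℝ) + 2) * t : ℝ) : ℂ) := by push_cast; ring
    have e2 : ((m + 1 : ℕ) : ℂ) * ((t : ℂ) ^ 2 - 1) =
        (((((m : ℝ) + 1) * (t ^ 2 - 1)) : ℝ) : ℂ) := by push_cast; ring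
    rw [e1, e2, Complex.ofReal_re]
    have e3 : ‖(((((m : ℝ) + 1) * (t ^ 2 - 1)) : ℝ) : ℂ)‖ =
        ((m : ℝ) + 1) * (1 - t ^ 2) := by
      have htt : t ^ 2 ≤ 1 := by nlinarith
      have hmp : (0 : ℝ) ≤ (m : ℝ) + 1 := by positivity
      rw [Complex.norm_real, Real.norm_eq_abs, abs_of_nonpos (by nlinarith)]
      ring
    rw [e3]
    have e4 : ∀ k : ℕ, ((m : ℝ) + 1) * (1 - t ^ 2) * r ^ (k + 1) =
        (((m : ℝ) + 1) * (1 - t ^ 2) * r) * r ^ k := by intro k; ring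
    rw [tsum_congr e4, tsum_mul_left, tsum_geometric_of_lt_one (le_of_lt hr0) hr2]
    have e5 : ((Fintype.card (Fin (m + 2)) : ℂ)).re = (m : ℝ) + 2 := by
      simp
    rw [e5]
    -- now a real inequality
    have hrne : (1 - r) ≠ 0 := by linarith
    have h5 : 0 < (1 - t) * (1 - r)⁻¹ := by
      have h7 : 0 < (1 - r)⁻¹ := inv_pos.mpr (by linarith)
      nlinarith
    have h6 := mul_lt_mul_of_pos_right hkey h5
    have l1 : ((m : ℝ) + 2) * (1 - r) * ((1 - t) * (1 - r)⁻¹) = ((m : ℝ) + 2) * (1 - t) := by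
      field_simp
    have l2 : ((m : ℝ) + 1) * r * (1 + t) * ((1 - t) * (1 - r)⁻¹) =
        ((m : ℝ) + 1) * (1 - t ^ 2) * r * (1 - r)⁻¹ := by ring
    rw [l1, l2] at h6
    nlinarith [h6]
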